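/- Let X̃ = S(1,…,1) ⊆ P^{2n−1} be the smooth rational normal scroll of type (1,…,1) (n ones) with n ≥ 2, and let p ∈ P^{2n−1} \ X̃ be a closed point. Then Σ_p(X̃) is a smooth quadric surface. -/

import Mathlib

/-!
Common framework: projective space over an algebraically closed field, linear
subspaces, Zariski closure, tangent spaces, secant cones and secant loci,
rational normal scrolls (possibly cones) and their distinguished subvarieties.
-/

open Projectivization MvPolynomial

noncomputable section

namespace SecantLoci

/-- Projective `N`-space over `K`, with homogeneous coordinates indexed by `Fin (N+1)`. -/
abbrev PS (K : Type*) [Field K] (N : ℕ) := Projectivization K (Fin (N + 1) → K)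

variable {K : Type*} [Field K] {N : ℕ}

/-- The affine cone over a set of projective points (it contains `0`). -/
def cone (S : Set (PS K N)) : Set (Fin (N + 1) → K) :=
  { v | ∀ hv : v ≠ 0, Projectivization.mk K v hv ∈ S }

/-- The set of projective points lying in the projectivization of a linear subspace `W`. -/
def linSet (W : Submodule K (Fin (N + 1) → K)) : Set (PS K N) :=
  { x | x.submodule ≤ W }

/-- `S` is a projective linear subspace of (projective) dimension `d`. -/
def IsLinearOfDim (S : Set (PS K N)) (d : ℕ) : Prop :=
  ∃ W : Submodule K (Fin (N + 1) → K), Module.finrank K W = d + 1 ∧ S = linSet W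

/-- The projective linear span of a set of projective points. -/
def projSpan (S : Set (PS K N)) : Set (PS K N) :=
  linSet (⨆ x ∈ S, x.submodule)

/-- The line through two points (the span of the pair). -/
def lineThrough (p q : PS K N) : Set (PS K N) := projSpan {p, q}

def IsLine (S : Set (PS K N)) : Prop := IsLinearOfDim S 1

def IsPlane (S : Set (PS K N)) : Prop := IsLinearOfDim S 2

/-- The polynomials vanishing on the affine cone over `S`. -/
def vanishing (S : Set (PS K N)) : Set (MvPolynomial (Fin (N + 1)) K) :=
  { f | ∀ v ∈ cone S, eval v f = 0 }

/-- The Zariski closure of a set of projective points. -/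
def zcl (S : Set (PS K N)) : Set (PS K N) :=
  { x | ∀ f ∈ vanishing S, eval x.rep f = 0 }

def IsZClosed (S : Set (PS K N)) : Prop := zcl S = S

/-- Irreducibility with respect to Zariski closed sets. -/
def IsIrred (S : Set (PS K N)) : Prop :=
  S.Nonempty ∧ ∀ A B : Set (PS K N),
    IsZClosed A → IsZClosed B → S ⊆ A ∪ B → S ⊆ A ∨ S ⊆ B

/-- `dimGE S k` : the (Zariski) dimension of `S` is at least `k`, i.e. there is a
strictly increasing chain of `k+1` nonempty irreducible closed subsets of the closure of `S`. -/
def dimGE (S : Set (PS K N)) (k : ℕ) : Prop :=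
  ∃ c : Fin (k + 1) → Set (PS K N), StrictMono c ∧
    (∀ i, IsZClosed (c i) ∧ IsIrred (c i)) ∧ c (Fin.last k) ⊆ zcl S

/-- The embedded join of two sets: the Zariski closure of the union of all lines
joining a point of `Y` to a point of `Z` (together with `Y` and `Z` themselves). -/
def join (Y Z : Set (PS K N)) : Set (PS K N) :=
  zcl (Y ∪ Z ∪ ⋃ y ∈ Y, ⋃ z ∈ Z, lineThrough y z)

/-- The (projective) Zariski tangent space of `X` at `q`: the projectivization of the
kernel of the linear parts at `q` of all polynomials vanishing on the cone over `X`. -/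
def tangentSpace (X : Set (PS K N)) (q : PS K N) : Set (PS K N) :=
  { x | ∀ f ∈ vanishing X, ∑ i, x.rep i * eval q.rep (pderiv i f) = 0 }

/-- A line `L` is a secant line of `X` when it meets `X` in a scheme of length at least 2:
equivalently, it meets `X` in two distinct points, or it is tangent to `X` at some point. -/
def IsSecantLine (X L : Set (PS K N)) : Prop :=
  IsLine L ∧
    ((∃ x ∈ X ∩ L, ∃ y ∈ X ∩ L, x ≠ y) ∨ ∃ q ∈ X ∩ L, L ⊆ tangentSpace X q)

/-- The secant cone `Sec_p(X)`: the union of all secant lines of `X` through `p`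
(just `{p}` if there is no such line). -/
def secCone (X : Set (PS K N)) (p : PS K N) : Set (PS K N) :=
  {p} ∪ ⋃ L ∈ { L | IsSecantLine X L ∧ p ∈ L }, L

/-- The secant locus `Σ_p(X)` (as a set: the support of the scheme-theoretic
intersection of `X` with the secant cone). -/
def secLocus (X : Set (PS K N)) (p : PS K N) : Set (PS K N) :=
  X ∩ secCone X p

/-- The secant variety: the Zariski closure of the union of all chords of `X`. -/
def secVariety (X : Set (PS K N)) : Set (PS K N) :=
  zcl (⋃ x ∈ X, ⋃ y ∈ X, ⋃ _ : x ≠ y, lineThrough x y)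

/-- The tangent variety: the Zariski closure of the union of all tangent spaces of `X`. -/
def tanVariety (X : Set (PS K N)) : Set (PS K N) :=
  zcl (⋃ q ∈ X, tangentSpace X q)

/-- `S` is a smooth plane conic: the image of `ℙ¹` under a degree-2 Veronese map into
the plane spanned by three linearly independent vectors. -/
def IsSmoothConic (S : Set (PS K N)) : Prop :=
  ∃ v : Fin 3 → (Fin (N + 1) → K), LinearIndependent K v ∧
    S = { x | ∃ s t : K, (s, t) ≠ (0, 0) ∧
      x.submodule = Submodule.span K {s ^ 2 • v 0 + (s * t) • v 1 + t ^ 2 • v 2} }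

/-- `S` is a smooth quadric surface (in the 3-space spanned by four independent vectors):
the image of `ℙ¹ × ℙ¹` under a Segre map. -/
def IsSmoothQuadricSurface (S : Set (PS K N)) : Prop :=
  ∃ v : Fin 2 → Fin 2 → (Fin (N + 1) → K),
    LinearIndependent K (fun q : Fin 2 × Fin 2 => v q.1 q.2) ∧
    S = { x | ∃ b c : Fin 2 → K, b ≠ 0 ∧ c ≠ 0 ∧
      x.submodule = Submodule.span K {∑ i, ∑ j, (b i * c j) • v i j} }

/-- The data of a smooth rational normal scroll of type `(a 0, …, a (n-1))` in `ℙ^N`: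
a family of linearly independent vectors `v i j`, `0 ≤ j ≤ a i`, giving the rational
normal curve directrices of the scroll. -/
structure ScrollData (K : Type*) [Field K] (N n : ℕ) (a : Fin n → ℕ) where
  v : (i : Fin n) → Fin (a i + 1) → (Fin (N + 1) → K)
  indep : LinearIndependent K fun q : (i : Fin n) × Fin (a i + 1) => v q.1 q.2

namespace ScrollData

variable {n : ℕ} {a : Fin n → ℕ}

/-- The point of the `i`-th directrix curve over the parameter `(s : t) ∈ ℙ¹`. -/
def w (D : ScrollData K N n a) (i : Fin n) (s t : K) : Fin (N + 1) → K :=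
  ∑ j : Fin (a i + 1), (s ^ (a i - (j : ℕ)) * t ^ (j : ℕ)) • D.v i j

/-- The ruling of the scroll over the parameter `(s : t) ∈ ℙ¹`:
the linear span of the points of the directrix curves over `(s : t)`. -/
def ruling (D : ScrollData K N n a) (s t : K) : Set (PS K N) :=
  linSet (Submodule.span K (Set.range fun i => D.w i s t))

/-- The scroll itself: the union of its rulings. -/
def carrier (D : ScrollData K N n a) : Set (PS K N) :=
  ⋃ (s : K) (t : K) (_ : (s, t) ≠ (0, 0)), D.ruling s t

/-- A line section of the scroll: a line contained in the scroll meeting each ruling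
in exactly one point (a section of the scroll map `φ`). -/
def IsLineSection (D : ScrollData K N n a) (L : Set (PS K N)) : Prop :=
  IsLine L ∧ L ⊆ D.carrier ∧
    ∀ s t : K, (s, t) ≠ (0, 0) → ∃! x, x ∈ L ∩ D.ruling s t

/-- The subscroll `S(1̲)` swept out by the line sections, i.e. the subscroll
corresponding to the indices with `a i = 1`. -/
def sub1 (D : ScrollData K N n a) : Set (PS K N) :=
  ⋃ (s : K) (t : K) (_ : (s, t) ≠ (0, 0)),
    linSet (Submodule.span K
      (Set.range fun i : { i : Fin n // a i = 1 } => D.w i.1 s t))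

/-- The subscroll `S(2̲)` corresponding to the indices with `a i = 2`. -/
def sub2 (D : ScrollData K N n a) : Set (PS K N) :=
  ⋃ (s : K) (t : K) (_ : (s, t) ≠ (0, 0)),
    linSet (Submodule.span K
      (Set.range fun i : { i : Fin n // a i = 2 } => D.w i.1 s t))

/-- The Segre variety `Δ = ⋃_β ⟨C_β⟩ ≅ ℙ² × ℙ^{m-k-1}`: the union of the planes of
the conic sections `C_β` of the subscroll `S(2̲)`. -/
def delta (D : ScrollData K N n a) : Set (PS K N) :=
  ⋃ (β : { i : Fin n // a i = 2 } → K) (_ : β ≠ 0),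
    linSet (Submodule.span K (Set.range fun j : Fin 3 =>
      ∑ i : { i : Fin n // a i = 2 }, β i •
        D.v i.1 ⟨(j : ℕ), by have h1 := i.2; have h2 := j.isLt; omega⟩))

end ScrollData

/-- The data of a (possibly singular) rational normal scroll in `ℙ^N` with vertex of
projective dimension `hv - 1` (empty vertex when `hv = 0`, i.e. a smooth scroll):
a cone over the smooth rational normal scroll `base`, with vertex spanned by the
vectors `zv`, the whole configuration being linearly independent and spanning `ℙ^N`. -/
structure ConeScroll (K : Type*) [Field K] (N n : ℕ) (a : Fin n → ℕ) (hv : ℕ) where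
  zv : Fin hv → (Fin (N + 1) → K)
  base : ScrollData K N n a
  indep : LinearIndependent K
    (Sum.elim zv fun q : (i : Fin n) × Fin (a i + 1) => base.v q.1 q.2)
  total : N + 1 = hv + ∑ i, (a i + 1)

namespace ConeScroll

variable {n hv : ℕ} {a : Fin n → ℕ}

/-- The vertex `Vert(X̃)` of the cone. -/
def vertex (C : ConeScroll K N n a hv) : Set (PS K N) :=
  linSet (Submodule.span K (Set.range C.zv))

/-- The linear span `⟨X̃₀⟩` of the smooth base scroll. -/
def baseSpan (C : ConeScroll K N n a hv) : Set (PS K N) :=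
  projSpan C.base.carrier

/-- The scroll `X̃ = Join(Vert(X̃), X̃₀)` itself. -/
def carrier (C : ConeScroll K N n a hv) : Set (PS K N) :=
  join C.vertex C.base.carrier

/-- `Σ_p(X̃) = 2·Vert(X̃)`: the secant locus is (set-theoretically) the vertex,
with double structure. -/
def SLempty (C : ConeScroll K N n a hv) (p : PS K N) : Prop :=
  secLocus C.carrier p = C.vertex

/-- `Σ_p(X̃) = Join(Vert(X̃), {x, y})` for two distinct points `x, y` of `⟨X̃₀⟩`. -/
def SLpair (C : ConeScroll K N n a hv) (p : PS K N) : Prop :=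
  ∃ x y : PS K N, x ∈ C.baseSpan ∧ y ∈ C.baseSpan ∧ x ≠ y ∧
    secLocus C.carrier p = join C.vertex {x, y}

/-- `Σ_p(X̃) = 2⟨Vert(X̃), x⟩` for a point `x` of a line `L ⊆ ⟨X̃₀⟩`. -/
def SLdouble (C : ConeScroll K N n a hv) (p : PS K N) : Prop :=
  ∃ L : Set (PS K N), IsLine L ∧ L ⊆ C.baseSpan ∧ ∃ x ∈ L,
    secLocus C.carrier p = projSpan (C.vertex ∪ {x})

/-- `Σ_p(X̃) = Join(Vert(X̃), L ∪ L')` for two distinct coplanar lines `L, L' ⊆ ⟨X̃₀⟩`. -/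
def SLlines (C : ConeScroll K N n a hv) (p : PS K N) : Prop :=
  ∃ L L' : Set (PS K N), IsLine L ∧ IsLine L' ∧ L ≠ L' ∧
    (∃ Pl : Set (PS K N), IsPlane Pl ∧ L ⊆ Pl ∧ L' ⊆ Pl) ∧
    L ⊆ C.baseSpan ∧ L' ⊆ C.baseSpan ∧
    secLocus C.carrier p = join C.vertex (L ∪ L')

/-- `Σ_p(X̃) = Join(Vert(X̃), V)` for a smooth plane conic `V ⊆ ⟨X̃₀⟩`. -/
def SLconic (C : ConeScroll K N n a hv) (p : PS K N) : Prop :=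
  ∃ V : Set (PS K N), IsSmoothConic V ∧ V ⊆ C.baseSpan ∧
    secLocus C.carrier p = join C.vertex V

/-- `Σ_p(X̃) = Join(Vert(X̃), W)` for a smooth quadric surface `W ⊆ ⟨X̃₀⟩`. -/
def SLquadric (C : ConeScroll K N n a hv) (p : PS K N) : Prop :=
  ∃ W : Set (PS K N), IsSmoothQuadricSurface W ∧ W ⊆ C.baseSpan ∧
    secLocus C.carrier p = join C.vertex W

end ConeScroll

/-- The homogeneous vanishing ideal of a set of projective points. -/
def vanishingIdeal (S : Set (PS K N)) : Ideal (MvPolynomial (Fin (N + 1)) K) where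
  carrier := vanishing S
  add_mem' := by
    intro f g hf hg v hv
    simp [map_add, hf v hv, hg v hv]
  zero_mem' := by intro v hv; simp
  smul_mem' := by
    intro c f hf v hv
    simp [smul_eq_mul, hf v hv]

/-- `rs` is a regular sequence on `R/I` (expressed without passing to the quotient):
the sequence stays proper modulo `I` and each entry is a nonzerodivisor modulo
`I` together with the previous entries. -/
def IsRegModulo {R : Type*} [CommRing R] (I : Ideal R) (rs : List R) : Prop :=
  (I ⊔ Ideal.span { x | x ∈ rs } ≠ ⊤) ∧
  ∀ (i : ℕ) (h : i < rs.length) (y : R),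
    rs.get ⟨i, h⟩ * y ∈ I ⊔ Ideal.span { x | x ∈ rs.take i } →
    y ∈ I ⊔ Ideal.span { x | x ∈ rs.take i }

/-- `S ⊆ ℙ^N` is arithmetically Cohen–Macaulay: its homogeneous coordinate ring
admits a regular sequence, inside the irrelevant maximal ideal, of length equal to
its Krull dimension. -/
def IsACM (S : Set (PS K N)) : Prop :=
  ∃ rs : List (MvPolynomial (Fin (N + 1)) K),
    (∀ f ∈ rs, f ∈ Ideal.span
      (Set.range (MvPolynomial.X : Fin (N + 1) → MvPolynomial (Fin (N + 1)) K))) ∧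
    IsRegModulo (vanishingIdeal S) rs ∧
    ((rs.length : ℕ∞) : WithBot ℕ∞) =
      ringKrullDim (MvPolynomial (Fin (N + 1)) K ⧸ vanishingIdeal S)

/-- The image of a subset of `ℙ^N` under the linear projection induced by a linear
map `T` on homogeneous coordinates. -/
def projImage {M : ℕ} (T : (Fin (N + 1) → K) →ₗ[K] (Fin (M + 1) → K))
    (X : Set (PS K N)) : Set (PS K M) :=
  { y | ∃ x ∈ X, y.submodule = Submodule.map T x.submodule }

end SecantLoci

/-! ## Statement 8 (Lemma 4.3(2)): secant loci of `S(1,…,1) ⊆ ℙ^{2n-1}` -/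

namespace SecantLoci

/-! ### Auxiliary material for the proof -/

open MvPolynomial

section ProjAux

variable {K : Type*} [Field K] {N : ℕ}

lemma mem_linSet_iff {W : Submodule K (Fin (N + 1) → K)} (x : PS K N) :
    x ∈ linSet W ↔ x.rep ∈ W := by
  change x.submodule ≤ W ↔ _
  rw [Projectivization.submodule_eq, Submodule.span_singleton_le_iff_mem]

lemma mk_mem_linSet_iff {W : Submodule K (Fin (N + 1) → K)} {v : Fin (N + 1) → K} (hv : v ≠ 0) :
    Projectivization.mk K v hv ∈ linSet W ↔ v ∈ W := by
  change (Projectivization.mk K v hv).submodule ≤ W ↔ _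
  rw [Projectivization.submodule_mk, Submodule.span_singleton_le_iff_mem]

lemma indep_reps {x y : PS K N} (h : x ≠ y) : LinearIndependent K ![x.rep, y.rep] := by
  rw [linearIndependent_fin2]
  refine ⟨by simpa using y.rep_nonzero, fun a ha => ?_⟩
  simp only [Matrix.cons_val_one, Matrix.head_cons, Matrix.cons_val_zero] at ha
  exact h (by rw [← x.mk_rep, ← y.mk_rep, Projectivization.mk_eq_mk_iff']; exact ⟨a, ha⟩)

lemma line_coords {W : Submodule K (Fin (N + 1) → K)} (hW : Module.finrank K ↥W = 2)
    {u v z : Fin (N + 1) → K} (huv : LinearIndependent K ![u, v])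
    (hu : u ∈ W) (hv : v ∈ W) (hz : z ∈ W) : ∃ s t : K, z = s • u + t • v := by
  have hr : Set.range ![u, v] = {u, v} := by
    ext w
    simp [Fin.exists_fin_two, or_comm]
  have h1 : Submodule.span K {u, v} ≤ W := by
    rw [Submodule.span_le, Set.insert_subset_iff, Set.singleton_subset_iff]; exact ⟨hu, hv⟩
  have h2 : Submodule.span K {u, v} = W := by
    refine Submodule.eq_of_le_of_finrank_le h1 ?_
    rw [hW, ← hr, finrank_span_eq_card huv]
    simp
  rw [← h2] at hz
  obtain ⟨s, t, hst⟩ := Submodule.mem_span_pair.mp hz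
  exact ⟨s, t, hst.symm⟩

/-- Explicit 2-dimensional linear algebra: if `α, β` are independent and lie in the
"span" of `r, c` (with explicit coefficients), any other element of that span is a
combination of `α, β`. -/
lemma spanPair {m : ℕ} {α β γ r c : Fin m → K} (hαβ : LinearIndependent K ![α, β])
    {a1 a2 b1 b2 x y : K} (hα : ∀ k, α k = a1 * r k + a2 * c k)
    (hβ : ∀ k, β k = b1 * r k + b2 * c k)
    (hγ : ∀ k, γ k = x * r k + y * c k) :
    ∃ g1 g2 : K, ∀ k, γ k = g1 * α k + g2 * β k := by
  have key : ∀ u0 v0 : K, (∀ k, u0 * α k + v0 * β k = 0) → u0 = 0 ∧ v0 = 0 := by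
    intro u0 v0 h
    have := Fintype.linearIndependent_iff.mp hαβ ![u0, v0] (by
      rw [Fin.sum_univ_two]
      funext k
      simpa using h k)
    exact ⟨this 0, this 1⟩
  have hd : a1 * b2 - a2 * b1 ≠ 0 := by
    intro h0
    by_cases ha1 : a1 = 0
    · by_cases ha2 : a2 = 0
      · rcases key 1 0 (fun k => by rw [hα k, hβ k]; rw [ha1, ha2]; ring) with ⟨h, _⟩
        exact one_ne_zero h
      · rcases key b2 (-a2) (fun k => by rw [hα k, hβ k]; linear_combination r k * h0) with ⟨_, h⟩
        exact ha2 (neg_eq_zero.mp h)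
    · rcases key b1 (-a1) (fun k => by rw [hα k, hβ k]; linear_combination (-(c k)) * h0) with ⟨_, h⟩
      exact ha1 (neg_eq_zero.mp h)
  refine ⟨(x * b2 - y * b1) / (a1 * b2 - a2 * b1), (y * a1 - x * a2) / (a1 * b2 - a2 * b1), fun k => ?_⟩
  rw [hα k, hβ k, hγ k]
  have hd' : b2 * a1 - b1 * a2 ≠ 0 := fun h => hd (by linear_combination h)
  field_simp
  ring

end ProjAux

section CurveAux

variable {K : Type*} [Field K] {N : ℕ}

lemma aeval_line_coeff (z₀ z₁ : Fin (N + 1) → K) (f : MvPolynomial (Fin (N + 1)) K) :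
    (MvPolynomial.aeval (fun i => Polynomial.C (z₀ i) + Polynomial.X * Polynomial.C (z₁ i)) f).coeff 0
      = MvPolynomial.eval z₀ f ∧
    (MvPolynomial.aeval (fun i => Polynomial.C (z₀ i) + Polynomial.X * Polynomial.C (z₁ i)) f).coeff 1
      = ∑ i, z₁ i * MvPolynomial.eval z₀ (MvPolynomial.pderiv i f) := by
  induction f using MvPolynomial.induction_on with
  | C a => refine ⟨by simp, by simp⟩
  | add f g hf hg =>
      refine ⟨by simp only [map_add, Polynomial.coeff_add, hf.1, hg.1], ?_⟩
      simp only [map_add, Polynomial.coeff_add, hf.2, hg.2, MvPolynomial.eval_add, mul_add,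
        Finset.sum_add_distrib]
  | mul_X f i hf =>
      have hq : (MvPolynomial.aeval
            (fun i => Polynomial.C (z₀ i) + Polynomial.X * Polynomial.C (z₁ i))
            (f * MvPolynomial.X i))
          = (MvPolynomial.aeval
              (fun i => Polynomial.C (z₀ i) + Polynomial.X * Polynomial.C (z₁ i)) f)
              * Polynomial.C (z₀ i)
            + ((MvPolynomial.aeval
              (fun i => Polynomial.C (z₀ i) + Polynomial.X * Polynomial.C (z₁ i)) f)
              * Polynomial.X) * Polynomial.C (z₁ i) := by
        rw [map_mul, MvPolynomial.aeval_X]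
        ring
      constructor
      · rw [hq, Polynomial.coeff_add, Polynomial.coeff_mul_C, Polynomial.coeff_mul_C,
          Polynomial.coeff_mul_X_zero, hf.1]
        simp
      · rw [hq, Polynomial.coeff_add, Polynomial.coeff_mul_C, Polynomial.coeff_mul_C]
        have hx1 : ((MvPolynomial.aeval
              (fun i => Polynomial.C (z₀ i) + Polynomial.X * Polynomial.C (z₁ i)) f)
              * Polynomial.X).coeff 1
            = (MvPolynomial.aeval
              (fun i => Polynomial.C (z₀ i) + Polynomial.X * Polynomial.C (z₁ i)) f).coeff 0 :=
          Polynomial.coeff_mul_X _ 0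
        rw [hx1, hf.1, hf.2]
        have hstep : ∀ j, z₁ j * MvPolynomial.eval z₀ (MvPolynomial.pderiv j (f * MvPolynomial.X i))
            = z₁ j * MvPolynomial.eval z₀ (MvPolynomial.pderiv j f) * z₀ i
              + (if j = i then z₁ j * MvPolynomial.eval z₀ f else 0) := by
          intro j
          rw [MvPolynomial.pderiv_mul, MvPolynomial.pderiv_X]
          rcases eq_or_ne j i with rfl | hji
          · rw [if_pos rfl, Pi.single_eq_same, mul_one]
            simp only [map_add, map_mul, MvPolynomial.eval_X]
            ring
          · rw [if_neg hji, Pi.single_eq_of_ne (Ne.symm hji), mul_zero]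
            simp only [map_add, map_mul, MvPolynomial.eval_X, map_zero, add_zero]
            ring
        rw [Finset.sum_congr rfl fun j _ => hstep j, Finset.sum_add_distrib,
          Finset.sum_ite_eq' Finset.univ i (fun j => z₁ j * MvPolynomial.eval z₀ f)]
        simp only [Finset.mem_univ, if_pos]
        rw [show ∑ j, z₁ j * MvPolynomial.eval z₀ (MvPolynomial.pderiv j f) * z₀ i
            = (∑ j, z₁ j * MvPolynomial.eval z₀ (MvPolynomial.pderiv j f)) * z₀ i by
          rw [Finset.sum_mul]]
        ring

lemma directional_deriv_eq_zero [Infinite K] {S : Set (PS K N)} {z₀ z₁ : Fin (N + 1) → K}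
    (h : ∀ t : K, z₀ + t • z₁ ∈ cone S) {f : MvPolynomial (Fin (N + 1)) K}
    (hf : f ∈ vanishing S) :
    ∑ i, z₁ i * MvPolynomial.eval z₀ (MvPolynomial.pderiv i f) = 0 := by
  classical
  have hev : ∀ t : K, Polynomial.eval t
      (MvPolynomial.aeval (fun i => Polynomial.C (z₀ i) + Polynomial.X * Polynomial.C (z₁ i)) f)
      = MvPolynomial.eval (z₀ + t • z₁) f := by
    intro t
    have hcomp : (Polynomial.evalRingHom t).comp
        ((MvPolynomial.aeval (fun i => Polynomial.C (z₀ i) + Polynomial.X * Polynomial.C (z₁ i)) :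
          MvPolynomial (Fin (N + 1)) K →ₐ[K] Polynomial K) :
            MvPolynomial (Fin (N + 1)) K →+* Polynomial K)
        = (MvPolynomial.eval (z₀ + t • z₁) : MvPolynomial (Fin (N + 1)) K →+* K) := by
      apply MvPolynomial.ringHom_ext
      · intro r; simp
      · intro i
        simp only [RingHom.coe_comp, Function.comp_apply, AlgHom.coe_toRingHom,
          MvPolynomial.aeval_X, Polynomial.coe_evalRingHom, Polynomial.eval_add,
          Polynomial.eval_mul, Polynomial.eval_C, Polynomial.eval_X, MvPolynomial.eval_X,
          Pi.add_apply, Pi.smul_apply, smul_eq_mul]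
    exact DFunLike.congr_fun hcomp f
  have hzero : (MvPolynomial.aeval
      (fun i => Polynomial.C (z₀ i) + Polynomial.X * Polynomial.C (z₁ i)) f) = 0 :=
    Polynomial.funext fun t => by rw [hev t, Polynomial.eval_zero]; exact hf _ (h t)
  have h2 := (aeval_line_coeff z₀ z₁ f).2
  rw [hzero] at h2
  simpa using h2.symm

end CurveAux

section ScrollAux

variable {K : Type*} [Field K] {n : ℕ} (D : ScrollData K (2 * n - 1) n fun _ => 1)

/-- The vector with "coefficient matrix" `m` w.r.t. the frame `D.v`. -/
def linM : (Fin 2 → Fin n → K) →ₗ[K] (Fin (2 * n - 1 + 1) → K) where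
  toFun m := ∑ k : Fin n, ∑ j : Fin 2, m j k • D.v k j
  map_add' m m' := by simp [add_smul, Finset.sum_add_distrib]
  map_smul' r m := by simp [Finset.smul_sum, mul_smul]

/-- rank-one coefficient matrices. -/
def op (a : Fin 2 → K) (c : Fin n → K) : Fin 2 → Fin n → K := fun j k => a j * c k

/-- The vector with rank-one coefficient matrix `a ⊗ c`. -/
def vec (a : Fin 2 → K) (c : Fin n → K) : Fin (2 * n - 1 + 1) → K := linM D (op a c)

variable (hn : 1 ≤ n)

/-- The frame `D.v` as a basis of `K^{2n}`. -/
def bas : Module.Basis (Fin n × Fin 2) K (Fin (2 * n - 1 + 1) → K) :=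
  haveI : Nonempty ((i : Fin n) × Fin 2) := ⟨⟨⟨0, hn⟩, 0⟩⟩
  (basisOfLinearIndependentOfCardEqFinrank D.indep
    (by simp [Module.finrank_pi]; omega)).reindex (Equiv.sigmaEquivProd (Fin n) (Fin 2))

lemma bas_apply (k : Fin n) (j : Fin 2) : bas D hn (k, j) = D.v k j := by
  simp [bas, Module.Basis.reindex_apply, coe_basisOfLinearIndependentOfCardEqFinrank]

/-- The `(j, k)` coefficient of a vector w.r.t. the frame `D.v`. -/
def ent (j : Fin 2) (k : Fin n) : (Fin (2 * n - 1 + 1) → K) →ₗ[K] K :=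
  (bas D hn).coord (k, j)

lemma ent_linM (m : Fin 2 → Fin n → K) (j : Fin 2) (k : Fin n) :
    ent D hn j k (linM D m) = m j k := by
  classical
  have hlin : linM D m = ∑ q : Fin n × Fin 2, m q.2 q.1 • bas D hn q := by
    rw [Fintype.sum_prod_type]
    show (∑ k' : Fin n, ∑ j' : Fin 2, m j' k' • D.v k' j') = _
    exact Finset.sum_congr rfl fun k' _ => Finset.sum_congr rfl fun j' _ => by rw [bas_apply]
  rw [ent, hlin, map_sum]
  simp only [map_smul, Module.Basis.coord_apply, Module.Basis.repr_self, smul_eq_mul]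
  rw [Finset.sum_eq_single (k, j)]
  · simp
  · intro q _ hq
    simp [Finsupp.single_apply, hq]
  · intro h
    exact absurd (Finset.mem_univ _) h

lemma linM_ent (z : Fin (2 * n - 1 + 1) → K) :
    linM D (fun j k => ent D hn j k z) = z := by
  have h := (bas D hn).sum_repr z
  calc linM D (fun j k => ent D hn j k z)
      = ∑ q : Fin n × Fin 2, (bas D hn).repr z q • bas D hn q := by
        rw [Fintype.sum_prod_type]
        show (∑ k' : Fin n, ∑ j' : Fin 2, ent D hn j' k' z • D.v k' j') = _
        refine Finset.sum_congr rfl fun k' _ => Finset.sum_congr rfl fun j' _ => ?_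
        rw [bas_apply]
        rfl
    _ = z := h

lemma eq_of_ent_eq {z z' : Fin (2 * n - 1 + 1) → K}
    (h : ∀ j k, ent D hn j k z = ent D hn j k z') : z = z' := by
  rw [← linM_ent D hn z, ← linM_ent D hn z']
  exact congrArg _ (by funext j k; exact h j k)

lemma ent_vec (a : Fin 2 → K) (c : Fin n → K) (j : Fin 2) (k : Fin n) :
    ent D hn j k (vec D a c) = a j * c k := ent_linM D hn _ j k

lemma vec_smul (μ : K) (a : Fin 2 → K) (c : Fin n → K) :
    μ • vec D a c = vec D (μ • a) c := by
  rw [vec, vec, ← map_smul]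
  congr 1
  funext j k
  simp [op, mul_assoc]

lemma vec_smul' (μ : K) (a : Fin 2 → K) (c : Fin n → K) :
    μ • vec D a c = vec D a (μ • c) := by
  rw [vec, vec, ← map_smul]
  congr 1
  funext j k
  simp [op]; ring

lemma vec_add_right (a : Fin 2 → K) (c c' : Fin n → K) :
    vec D a c + vec D a c' = vec D a (c + c') := by
  rw [vec, vec, vec, ← map_add]
  congr 1
  funext j k
  simp [op]; ring

lemma vec_add_left (a a' : Fin 2 → K) (c : Fin n → K) :
    vec D a c + vec D a' c = vec D (a + a') c := by
  rw [vec, vec, vec, ← map_add]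
  congr 1
  funext j k
  simp [op]; ring

lemma vec_zero_left (c : Fin n → K) : vec D 0 c = 0 := by
  rw [vec, show op (0 : Fin 2 → K) c = 0 by funext j k; simp [op], map_zero]

lemma vec_zero_right (a : Fin 2 → K) : vec D a 0 = 0 := by
  rw [vec, show op a (0 : Fin n → K) = 0 by funext j k; simp [op], map_zero]

lemma w_eq (i : Fin n) (s t : K) : D.w i s t = s • D.v i 0 + t • D.v i 1 := by
  show (∑ j : Fin 2, (s ^ (1 - (j : ℕ)) * t ^ (j : ℕ)) • D.v i j) = _
  rw [Fin.sum_univ_two]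
  norm_num

lemma vec_eq_sum_w (a : Fin 2 → K) (c : Fin n → K) :
    vec D a c = ∑ k, c k • D.w k (a 0) (a 1) := by
  show (∑ k : Fin n, ∑ j : Fin 2, op a c j k • D.v k j) = _
  refine Finset.sum_congr rfl fun k _ => ?_
  rw [Fin.sum_univ_two, w_eq, smul_add, smul_smul, smul_smul, mul_comm (c k) (a 0),
    mul_comm (c k) (a 1)]
  rfl

lemma fin2_ne_zero_iff (a : Fin 2 → K) : a ≠ 0 ↔ ¬(a 0 = 0 ∧ a 1 = 0) := by
  constructor
  · intro h hc; exact h (funext fun j => by fin_cases j <;> simp [hc.1, hc.2])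
  · intro h hc; exact h (by simp [hc])

lemma mk_mem_carrier {v : Fin (2 * n - 1 + 1) → K} (hv : v ≠ 0) :
    Projectivization.mk K v hv ∈ D.carrier ↔ ∃ a c, a ≠ 0 ∧ c ≠ 0 ∧ v = vec D a c := by
  constructor
  · intro h
    rw [ScrollData.carrier] at h
    simp only [Set.mem_iUnion] at h
    obtain ⟨s, t, hst, hr⟩ := h
    rw [ScrollData.ruling, mk_mem_linSet_iff, Submodule.mem_span_range_iff_exists_fun] at hr
    obtain ⟨c, hcv⟩ := hr
    refine ⟨![s, t], c, ?_, ?_, ?_⟩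
    · rw [fin2_ne_zero_iff]
      simp only [Matrix.cons_val_zero, Matrix.cons_val_one, Matrix.head_cons]
      intro hc
      exact hst (by rw [hc.1, hc.2])
    · rintro rfl
      apply hv
      rw [← hcv]
      simp
    · rw [vec_eq_sum_w, ← hcv]
      simp
  · rintro ⟨a, c, ha, hc, rfl⟩
    rw [ScrollData.carrier]
    simp only [Set.mem_iUnion]
    refine ⟨a 0, a 1, ?_, ?_⟩
    · intro h
      rw [Prod.mk.injEq] at h
      exact (fin2_ne_zero_iff a).mp ha ⟨h.1, h.2⟩
    · rw [ScrollData.ruling, mk_mem_linSet_iff, Submodule.mem_span_range_iff_exists_fun]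
      exact ⟨c, (vec_eq_sum_w D a c).symm⟩

lemma mem_carrier_iff (x : PS K (2 * n - 1)) :
    x ∈ D.carrier ↔ ∃ a c, a ≠ 0 ∧ c ≠ 0 ∧ x.rep = vec D a c := by
  conv_lhs => rw [← x.mk_rep]
  exact mk_mem_carrier D x.rep_nonzero

lemma cone_vec (a : Fin 2 → K) (c : Fin n → K) : vec D a c ∈ cone D.carrier := by
  intro hv
  rw [mk_mem_carrier D hv]
  refine ⟨a, c, ?_, ?_, rfl⟩
  · rintro rfl; exact hv (vec_zero_left D c)
  · rintro rfl; exact hv (vec_zero_right D a)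

/-- The linear coordinate functionals as polynomials. -/
def entPoly (j : Fin 2) (k : Fin n) : MvPolynomial (Fin (2 * n - 1 + 1)) K :=
  ∑ i, MvPolynomial.C (ent D hn j k (Pi.single i 1)) * MvPolynomial.X i

lemma sum_mul_ent (y : Fin (2 * n - 1 + 1) → K) (j : Fin 2) (k : Fin n) :
    ∑ i, y i * ent D hn j k (Pi.single i 1) = ent D hn j k y := by
  classical
  conv_rhs => rw [show y = ∑ i, y i • (Pi.single i (1 : K) : Fin (2 * n - 1 + 1) → K) by
    funext l
    rw [Finset.sum_apply]
    simp [Pi.single_apply]]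
  rw [map_sum]
  simp [smul_eq_mul]

lemma eval_entPoly (z : Fin (2 * n - 1 + 1) → K) (j : Fin 2) (k : Fin n) :
    MvPolynomial.eval z (entPoly D hn j k) = ent D hn j k z := by
  rw [entPoly, map_sum]
  simp only [map_mul, MvPolynomial.eval_C, MvPolynomial.eval_X]
  exact Finset.sum_congr rfl (fun i _ => mul_comm _ _) |>.trans (sum_mul_ent D hn z j k)

lemma pderiv_entPoly (i : Fin (2 * n - 1 + 1)) (j : Fin 2) (k : Fin n) :
    (MvPolynomial.pderiv i) (entPoly D hn j k) = MvPolynomial.C (ent D hn j k (Pi.single i 1)) := by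
  classical
  rw [entPoly, map_sum]
  rw [Finset.sum_eq_single i]
  · simp [MvPolynomial.pderiv_C_mul, MvPolynomial.pderiv_X]
  · intro b _ hb
    simp [MvPolynomial.pderiv_C_mul, MvPolynomial.pderiv_X, Pi.single_apply, Ne.symm hb]
  · intro h
    exact absurd (Finset.mem_univ _) h

/-- The 2×2 minors of the coefficient matrix, as polynomials. -/
def minor (k k' : Fin n) : MvPolynomial (Fin (2 * n - 1 + 1)) K :=
  entPoly D hn 0 k * entPoly D hn 1 k' - entPoly D hn 0 k' * entPoly D hn 1 k

lemma minor_vanishing (k k' : Fin n) : minor D hn k k' ∈ vanishing D.carrier := by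
  intro v hv
  rcases eq_or_ne v 0 with rfl | hv0
  · rw [minor, map_sub, map_mul, map_mul, eval_entPoly, eval_entPoly, eval_entPoly,
      eval_entPoly, map_zero, map_zero, map_zero, map_zero]
    ring
  · obtain ⟨a, c, ha, hc, rfl⟩ := (mk_mem_carrier D hv0).mp (hv hv0)
    simp only [minor, map_sub, map_mul, eval_entPoly, ent_vec]
    ring

lemma deriv_pairing (y q : Fin (2 * n - 1 + 1) → K) (k k' : Fin n) :
    ∑ i, y i * MvPolynomial.eval q (MvPolynomial.pderiv i (minor D hn k k')) =
      ent D hn 0 k y * ent D hn 1 k' q + ent D hn 0 k q * ent D hn 1 k' y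
        - ent D hn 0 k' y * ent D hn 1 k q - ent D hn 0 k' q * ent D hn 1 k y := by
  classical
  have step : ∀ i, MvPolynomial.eval q (MvPolynomial.pderiv i (minor D hn k k')) =
      ent D hn 0 k (Pi.single i 1) * ent D hn 1 k' q + ent D hn 0 k q * ent D hn 1 k' (Pi.single i 1)
      - (ent D hn 0 k' (Pi.single i 1) * ent D hn 1 k q
        + ent D hn 0 k' q * ent D hn 1 k (Pi.single i 1)) := by
    intro i
    rw [minor, map_sub, MvPolynomial.pderiv_mul, MvPolynomial.pderiv_mul]
    simp only [map_sub, map_add, map_mul, pderiv_entPoly, eval_entPoly, MvPolynomial.eval_C]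
  have hterm : ∀ i, y i * MvPolynomial.eval q (MvPolynomial.pderiv i (minor D hn k k')) =
      (y i * ent D hn 0 k (Pi.single i 1)) * ent D hn 1 k' q
      + ent D hn 0 k q * (y i * ent D hn 1 k' (Pi.single i 1))
      - (y i * ent D hn 0 k' (Pi.single i 1)) * ent D hn 1 k q
      - ent D hn 0 k' q * (y i * ent D hn 1 k (Pi.single i 1)) := fun i => by rw [step i]; ring
  rw [Finset.sum_congr rfl fun i _ => hterm i]
  rw [Finset.sum_sub_distrib, Finset.sum_sub_distrib, Finset.sum_add_distrib,
    ← Finset.sum_mul, ← Finset.mul_sum, ← Finset.sum_mul, ← Finset.mul_sum,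
    sum_mul_ent, sum_mul_ent, sum_mul_ent, sum_mul_ent]

/-- Tangent space upper bound: conditions from the minors at a rank-one point force
the rows to lie in the span of `r` and `c`. -/
lemma tangent_rows {Y : Fin 2 → Fin n → K} {a : Fin 2 → K} {c : Fin n → K}
    (ha : a ≠ 0) (hc : c ≠ 0)
    (hrel : ∀ k k' : Fin n, Y 0 k * (a 1 * c k') + (a 0 * c k) * Y 1 k'
        - Y 0 k' * (a 1 * c k) - (a 0 * c k') * Y 1 k = 0) :
    ∃ (r : Fin n → K) (s : Fin 2 → K), ∀ (j : Fin 2) (k : Fin n), Y j k = a j * r k + s j * c k := by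
  classical
  obtain ⟨k₀, hk₀⟩ := Function.ne_iff.mp hc
  simp only [Pi.zero_apply] at hk₀
  have hprop : ∀ k, (a 1 * Y 0 k - a 0 * Y 1 k) * c k₀
      = (a 1 * Y 0 k₀ - a 0 * Y 1 k₀) * c k := by
    intro k
    linear_combination hrel k k₀
  by_cases ha0 : a 0 = 0
  · have ha1 : a 1 ≠ 0 := by
      intro h1
      exact ha (funext fun j => by fin_cases j <;> simp [ha0, h1])
    refine ⟨fun k => Y 1 k / a 1, ![(a 1 * Y 0 k₀ - a 0 * Y 1 k₀) / (c k₀ * a 1), 0],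
      fun j => ?_⟩
    fin_cases j
    · intro k
      simp only [Fin.zero_eta, Fin.mk_one, Matrix.cons_val_zero]
      field_simp
      linear_combination hprop k
    · intro k
      simp only [Fin.zero_eta, Fin.mk_one, Matrix.cons_val_one, Matrix.cons_val_fin_one, Matrix.head_cons, zero_mul, mul_zero, add_zero, zero_add]
      field_simp
  · refine ⟨fun k => Y 0 k / a 0, ![0, -((a 1 * Y 0 k₀ - a 0 * Y 1 k₀) / (c k₀ * a 0))],
      fun j => ?_⟩
    fin_cases j
    · intro k
      simp only [Fin.zero_eta, Fin.mk_one, Matrix.cons_val_zero, zero_mul, mul_zero, add_zero, zero_add]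
      field_simp
    · intro k
      simp only [Fin.zero_eta, Fin.mk_one, Matrix.cons_val_one, Matrix.cons_val_fin_one, Matrix.head_cons]
      field_simp
      linear_combination -hprop k

end ScrollAux


set_option maxHeartbeats 1600000 in
/-- Let `X̃ = S(1,…,1) ⊆ ℙ^{2n-1}` (`n` ones, `n ≥ 2`) and let `p ∈ ℙ^{2n-1} \ X̃`.
Then `Σ_p(X̃)` is a smooth quadric surface. -/
theorem secLocus_of_segre_scroll {K : Type*} [Field K] [IsAlgClosed K]
    (n : ℕ) (hn : 2 ≤ n)
    (D : ScrollData K (2 * n - 1) n fun _ => 1)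
    (p : PS K (2 * n - 1)) (hp : p ∉ D.carrier) :
    IsSmoothQuadricSurface (secLocus D.carrier p) := by
  classical
  have hn1 : 1 ≤ n := by omega
  -- the rows of the coefficient matrix of `p`
  obtain ⟨α, hαdef⟩ : ∃ α : Fin n → K, α = fun k => ent D hn1 0 k p.rep := ⟨_, rfl⟩
  obtain ⟨β, hβdef⟩ : ∃ β : Fin n → K, β = fun k => ent D hn1 1 k p.rep := ⟨_, rfl⟩
  have hαk : ∀ k, ent D hn1 0 k p.rep = α k := fun k => by rw [hαdef]
  have hβk : ∀ k, ent D hn1 1 k p.rep = β k := fun k => by rw [hβdef]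
  have hzero_rows : (∀ k, α k = 0) → (∀ k, β k = 0) → False := by
    intro h0 h1
    apply p.rep_nonzero
    rw [← linM_ent D hn1 p.rep]
    have hent0 : (fun j k => ent D hn1 j k p.rep) = 0 := by
      funext j k
      fin_cases j
      · show ent D hn1 0 k p.rep = 0
        rw [hαk k]; exact h0 k
      · show ent D hn1 1 k p.rep = 0
        rw [hβk k]; exact h1 k
    rw [hent0, map_zero]
  -- `α, β` independent because `p ∉ X`
  have hαβ : LinearIndependent K ![α, β] := by
    by_contra hdep
    obtain ⟨g, hg, i, hgi⟩ := Fintype.not_linearIndependent_iff.mp hdep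
    have hsum0 : ∀ k, g 0 * α k + g 1 * β k = 0 := by
      intro k
      have h1 := congrFun hg k
      simpa [Fin.sum_univ_two] using h1
    apply hp
    rw [mem_carrier_iff]
    by_cases hg0 : g 0 = 0
    · have hg1 : g 1 ≠ 0 := by
        intro h1
        fin_cases i
        · exact hgi hg0
        · exact hgi h1
      have hβ0 : ∀ k, β k = 0 := by
        intro k
        have h2 := hsum0 k
        rw [hg0, zero_mul, zero_add] at h2
        exact (mul_eq_zero.mp h2).resolve_left hg1
      refine ⟨![1, 0], α, ?_, ?_, ?_⟩
      · rw [fin2_ne_zero_iff]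
        simp
      · intro hα0
        exact hzero_rows (fun k => congrFun hα0 k) hβ0
      · apply eq_of_ent_eq D hn1
        intro j k
        rw [ent_vec]
        fin_cases j
        · show ent D hn1 0 k p.rep = (1 : K) * α k
          rw [hαk k, one_mul]
        · show ent D hn1 1 k p.rep = (0 : K) * α k
          rw [hβk k, hβ0 k, zero_mul]
    · have hαval : ∀ k, α k = -(g 1 / g 0) * β k := by
        intro k
        field_simp
        linear_combination hsum0 k
      refine ⟨![-(g 1 / g 0), 1], β, ?_, ?_, ?_⟩
      · rw [fin2_ne_zero_iff]
        simp
      · intro hβ0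
        refine hzero_rows (fun k => ?_) (fun k => congrFun hβ0 k)
        rw [hαval k, congrFun hβ0 k]
        simp
      · apply eq_of_ent_eq D hn1
        intro j k
        rw [ent_vec]
        fin_cases j
        · show ent D hn1 0 k p.rep = -(g 1 / g 0) * β k
          rw [hαk k]; exact hαval k
        · show ent D hn1 1 k p.rep = (1 : K) * β k
          rw [hβk k, one_mul]
  -- the quadric frame
  obtain ⟨U, hUdef⟩ : ∃ U : Fin 2 → Fin 2 → (Fin (2 * n - 1 + 1) → K),
      U = fun i j => vec D (Pi.single i 1) (if j = 0 then α else β) := ⟨_, rfl⟩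
  have hUsum : ∀ b c : Fin 2 → K,
      (∑ i, ∑ j, (b i * c j) • U i j) = vec D b (fun k => c 0 * α k + c 1 * β k) := by
    intro b c
    have h1 : (∑ i, ∑ j, (b i * c j) • U i j)
        = linM D (∑ i : Fin 2, ∑ j : Fin 2,
            (b i * c j) • op (Pi.single i 1) (if j = 0 then α else β)) := by
      rw [map_sum]
      refine Finset.sum_congr rfl fun i _ => ?_
      rw [map_sum]
      refine Finset.sum_congr rfl fun j _ => ?_
      rw [map_smul, hUdef]
      rfl
    rw [h1, vec]
    congr 1
    funext j' k
    simp only [Finset.sum_apply, Pi.smul_apply, smul_eq_mul, op, Fin.sum_univ_two,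
      Pi.single_apply]
    fin_cases j' <;> simp [op, Pi.single_apply] <;> ring
  have hUindep : LinearIndependent K (fun q : Fin 2 × Fin 2 => U q.1 q.2) := by
    rw [Fintype.linearIndependent_iff]
    intro g hg
    have hent : ∀ (j' : Fin 2) (k : Fin n) (q : Fin 2 × Fin 2),
        ent D hn1 j' k (g q • U q.1 q.2)
          = g q * ((Pi.single q.1 (1 : K) : Fin 2 → K) j' * (if q.2 = 0 then α k else β k)) := by
      intro j' k q
      simp only [map_smul, smul_eq_mul, hUdef]
      rw [ent_vec]
      by_cases h : q.2 = 0 <;> simp [h]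
    have hrow : ∀ (j' : Fin 2) (k : Fin n), g (j', 0) * α k + g (j', 1) * β k = 0 := by
      intro j' k
      have h1 := congrArg (ent D hn1 j' k) hg
      rw [map_sum, map_zero] at h1
      rw [Finset.sum_congr rfl fun q _ => hent j' k q] at h1
      rw [Fintype.sum_prod_type, Fin.sum_univ_two] at h1
      rw [Fin.sum_univ_two, Fin.sum_univ_two] at h1
      simp only [Pi.single_apply] at h1
      fin_cases j' <;> simp at h1 ⊢ <;> linear_combination h1
    intro q
    have h2 := Fintype.linearIndependent_iff.mp hαβ ![g (q.1, 0), g (q.1, 1)] (by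
      funext k
      simp only [Fin.sum_univ_two, Matrix.cons_val_zero, Matrix.cons_val_one,
        Matrix.head_cons, Pi.add_apply, Pi.smul_apply, smul_eq_mul, Pi.zero_apply]
      exact hrow q.1 k)
    rcases q with ⟨i, j⟩
    fin_cases j
    · simpa using h2 0
    · simpa using h2 1
  refine ⟨U, hUindep, ?_⟩
  ext x
  simp only [Set.mem_setOf_eq]
  constructor
  · rintro ⟨hxX, hxSec⟩
    obtain ⟨b, γ', hb, hγ', hxrep⟩ := (mem_carrier_iff D x).mp hxX
    have main : ∃ g1 g2 : K, ∀ k, γ' k = g1 * α k + g2 * β k := by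
      rcases hxSec with hxp | hxL
      · exact absurd ((Set.eq_of_mem_singleton hxp) ▸ hxX) hp
      · simp only [Set.mem_iUnion, Set.mem_setOf_eq] at hxL
        obtain ⟨L, ⟨⟨hLline, hLsec⟩, hpL⟩, hxL⟩ := hxL
        obtain ⟨W, hWrank, rfl⟩ := hLline
        rcases hLsec with ⟨y, ⟨hyX, hyL⟩, z, ⟨hzX, hzL⟩, hyz⟩ | ⟨q, ⟨hqX, hqL⟩, hqT⟩
        · -- two distinct points of `X` on the line
          obtain ⟨ay, cy, hay, hcy, hyrep⟩ := (mem_carrier_iff D y).mp hyX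
          obtain ⟨az, cz, haz, hcz, hzrep⟩ := (mem_carrier_iff D z).mp hzX
          obtain ⟨s, t, hps⟩ := line_coords hWrank (indep_reps hyz)
            ((mem_linSet_iff y).mp hyL) ((mem_linSet_iff z).mp hzL)
            ((mem_linSet_iff p).mp hpL)
          obtain ⟨s', t', hxs⟩ := line_coords hWrank (indep_reps hyz)
            ((mem_linSet_iff y).mp hyL) ((mem_linSet_iff z).mp hzL)
            ((mem_linSet_iff x).mp hxL)
          have hrowp : ∀ (j : Fin 2) (k : Fin n),
              ent D hn1 j k p.rep = (s * ay j) * cy k + (t * az j) * cz k := by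
            intro j k
            rw [hps, map_add, map_smul, map_smul, hyrep, hzrep, ent_vec, ent_vec,
              smul_eq_mul, smul_eq_mul]
            ring
          have hrowx : ∀ (j : Fin 2) (k : Fin n),
              b j * γ' k = (s' * ay j) * cy k + (t' * az j) * cz k := by
            intro j k
            rw [← ent_vec D hn1 b γ' j k, ← hxrep, hxs, map_add, map_smul, map_smul,
              hyrep, hzrep, ent_vec, ent_vec, smul_eq_mul, smul_eq_mul]
            ring
          obtain ⟨j₀, hj₀⟩ := Function.ne_iff.mp hb
          simp only [Pi.zero_apply] at hj₀
          have hγrow : ∀ k, γ' k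
              = (s' * ay j₀ / b j₀) * cy k + (t' * az j₀ / b j₀) * cz k := by
            intro k
            have h3 := hrowx j₀ k
            field_simp
            linear_combination h3
          have hA : ∀ k, α k = (s * ay 0) * cy k + (t * az 0) * cz k := fun k => by
            rw [← hαk k]; exact hrowp 0 k
          have hB : ∀ k, β k = (s * ay 1) * cy k + (t * az 1) * cz k := fun k => by
            rw [← hβk k]; exact hrowp 1 k
          exact spanPair hαβ hA hB hγrow
        · -- tangent line
          obtain ⟨a, c, ha, hc, hqrep⟩ := (mem_carrier_iff D q).mp hqX
          have hpq : p ≠ q := fun h => hp (h ▸ hqX)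
          have hTp := hqT hpL
          have hrel : ∀ k k' : Fin n,
              ent D hn1 0 k p.rep * (a 1 * c k')
              + (a 0 * c k) * ent D hn1 1 k' p.rep
              - ent D hn1 0 k' p.rep * (a 1 * c k)
              - (a 0 * c k') * ent D hn1 1 k p.rep
                = 0 := by
            intro k k'
            have h0 := hTp (minor D hn1 k k') (minor_vanishing D hn1 k k')
            have h1 := (deriv_pairing D hn1 p.rep q.rep k k').symm.trans h0
            rw [hqrep] at h1
            simp only [ent_vec] at h1
            linear_combination h1
          obtain ⟨r, sv, hrs⟩ :=
            tangent_rows (Y := fun (j : Fin 2) (k : Fin n) => ent D hn1 j k p.rep)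
              ha hc hrel
          obtain ⟨e₁, e₂, hxe⟩ := line_coords hWrank (indep_reps hpq)
            ((mem_linSet_iff p).mp hpL) ((mem_linSet_iff q).mp hqL)
            ((mem_linSet_iff x).mp hxL)
          have hrowx : ∀ (j : Fin 2) (k : Fin n),
              b j * γ' k = (e₁ * a j) * r k + (e₁ * sv j + e₂ * a j) * c k := by
            intro j k
            rw [← ent_vec D hn1 b γ' j k, ← hxrep, hxe, map_add, map_smul, map_smul,
              hqrep, ent_vec, smul_eq_mul, smul_eq_mul]
            have h4 := hrs j k
            rw [h4]
            ring
          obtain ⟨j₀, hj₀⟩ := Function.ne_iff.mp hb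
          simp only [Pi.zero_apply] at hj₀
          have hγrow : ∀ k, γ' k = (e₁ * a j₀ / b j₀) * r k
              + ((e₁ * sv j₀ + e₂ * a j₀) / b j₀) * c k := by
            intro k
            have h3 := hrowx j₀ k
            field_simp
            linear_combination h3
          have hA : ∀ k, α k = a 0 * r k + sv 0 * c k := fun k => by
            rw [← hαk k]; exact hrs 0 k
          have hB : ∀ k, β k = a 1 * r k + sv 1 * c k := fun k => by
            rw [← hβk k]; exact hrs 1 k
          exact spanPair hαβ hA hB hγrow
    obtain ⟨g1, g2, hg⟩ := main
    refine ⟨b, ![g1, g2], hb, ?_, ?_⟩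
    · rw [fin2_ne_zero_iff]
      rintro ⟨h1, h2⟩
      simp only [Matrix.cons_val_zero, Matrix.cons_val_one, Matrix.head_cons] at h1 h2
      apply hγ'
      funext k
      rw [Pi.zero_apply, hg k, h1, h2]
      ring
    · rw [Projectivization.submodule_eq, hxrep, hUsum b ![g1, g2]]
      have h5 : γ' = fun k => g1 * α k + g2 * β k := funext fun k => hg k
      rw [h5]
      simp
  · rintro ⟨b, c, hb, hc, hsub⟩
    have hγ0 : (fun k => c 0 * α k + c 1 * β k) ≠ 0 := by
      intro h0
      have h2 := Fintype.linearIndependent_iff.mp hαβ ![c 0, c 1] (by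
        funext k
        simp only [Finset.sum_apply, Fin.sum_univ_two, Pi.smul_apply, smul_eq_mul,
          Matrix.cons_val_zero, Matrix.cons_val_one, Matrix.head_cons, Pi.zero_apply]
        simpa using congrFun h0 k)
      apply (fin2_ne_zero_iff c).mp hc
      exact ⟨by simpa using h2 0, by simpa using h2 1⟩
    have hxmem : x.rep ∈ Submodule.span K {∑ i, ∑ j, (b i * c j) • U i j} := by
      rw [← hsub, Projectivization.submodule_eq]
      exact Submodule.mem_span_singleton_self _
    rw [Submodule.mem_span_singleton] at hxmem
    obtain ⟨μ, hμ⟩ := hxmem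
    rw [hUsum b c] at hμ
    have hμ0 : μ ≠ 0 := by
      intro h0
      exact x.rep_nonzero (by rw [← hμ, h0, zero_smul])
    have hxrep : x.rep = vec D (μ • b) (fun k => c 0 * α k + c 1 * β k) := by
      rw [← vec_smul]
      exact hμ.symm
    have hxrep' : x.rep = μ • vec D b (fun k => c 0 * α k + c 1 * β k) := hμ.symm
    have hxX : x ∈ D.carrier := by
      rw [mem_carrier_iff]
      exact ⟨μ • b, _, smul_ne_zero hμ0 hb, hγ0, hxrep⟩
    refine ⟨hxX, ?_⟩
    have hpx : p ≠ x := fun h => hp (h ▸ hxX)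
    have hW2 : Module.finrank K ↥(Submodule.span K {p.rep, x.rep}) = 2 := by
      have hr : Set.range ![p.rep, x.rep] = {p.rep, x.rep} := by
        ext w
        simp [Fin.exists_fin_two, or_comm]
      rw [← hr, finrank_span_eq_card (indep_reps hpx)]
      simp
    have hpL : p ∈ linSet (Submodule.span K {p.rep, x.rep}) :=
      (mem_linSet_iff p).mpr (Submodule.subset_span (by simp))
    have hxL : x ∈ linSet (Submodule.span K {p.rep, x.rep}) :=
      (mem_linSet_iff x).mpr (Submodule.subset_span (by simp))
    have hLline : IsLine (linSet (Submodule.span K {p.rep, x.rep})) :=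
      ⟨_, hW2, rfl⟩
    have hsec : IsSecantLine D.carrier (linSet (Submodule.span K {p.rep, x.rep})) := by
      by_cases hσ : b 0 * c 0 + b 1 * c 1 = 0
      · -- tangent line case
        refine ⟨hLline, Or.inr ⟨x, ⟨hxX, hxL⟩, ?_⟩⟩
        have hid : ∃ rh sh : Fin 2 → K, ∀ j l : Fin 2,
            b j * rh l + sh j * c l = if j = l then 1 else 0 := by
          by_cases hb0 : b 0 = 0
          · have hb1 : b 1 ≠ 0 := fun h => (fin2_ne_zero_iff b).mp hb ⟨hb0, h⟩
            have hc1 : c 1 = 0 := by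
              have hbc : b 1 * c 1 = 0 := by linear_combination hσ - c 0 * hb0
              exact (mul_eq_zero.mp hbc).resolve_left hb1
            have hc0 : c 0 ≠ 0 := fun h => (fin2_ne_zero_iff c).mp hc ⟨h, hc1⟩
            refine ⟨![0, 1 / b 1], ![1 / c 0, 0], fun j l => ?_⟩
            fin_cases j <;> fin_cases l <;>
              simp [hb0, hc1] <;> field_simp
          · have hc1 : c 1 ≠ 0 := by
              intro h1
              have hbc : b 0 * c 0 = 0 := by linear_combination hσ - b 1 * h1
              exact (fin2_ne_zero_iff c).mp hc ⟨(mul_eq_zero.mp hbc).resolve_left hb0, h1⟩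
            refine ⟨![1 / b 0, 0], ![0, 1 / c 1], fun j l => ?_⟩
            fin_cases j <;> fin_cases l
            · simp only [Fin.zero_eta, Fin.mk_one, Matrix.cons_val_zero, if_true, zero_mul, mul_zero, add_zero, zero_add]
              field_simp
            · simp only [Matrix.cons_val_zero, Matrix.cons_val_one, Matrix.head_cons]
              simp
            · simp only [Fin.zero_eta, Fin.mk_one, Matrix.cons_val_zero, Matrix.cons_val_one, Matrix.cons_val_fin_one, Matrix.head_cons, one_ne_zero, if_false]
              field_simp
              linear_combination hσ
            · simp only [Fin.zero_eta, Fin.mk_one, Matrix.cons_val_one, Matrix.cons_val_fin_one, Matrix.head_cons, if_true, zero_mul, mul_zero, add_zero, zero_add]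
              field_simp
        obtain ⟨rh, sh, hid⟩ := hid
        have hdecomp : p.rep = vec D b (fun k => rh 0 * α k + rh 1 * β k)
            + vec D sh (fun k => c 0 * α k + c 1 * β k) := by
          have h00 := hid 0 0
          have h01 := hid 0 1
          have h10 := hid 1 0
          have h11 := hid 1 1
          norm_num at h00 h01 h10 h11
          apply eq_of_ent_eq D hn1
          intro j k
          rw [map_add, ent_vec, ent_vec]
          fin_cases j
          · show ent D hn1 0 k p.rep
              = b 0 * (rh 0 * α k + rh 1 * β k) + sh 0 * (c 0 * α k + c 1 * β k)
            linear_combination hαk k - α k * h00 - β k * h01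
          · show ent D hn1 1 k p.rep
              = b 1 * (rh 0 * α k + rh 1 * β k) + sh 1 * (c 0 * α k + c 1 * β k)
            linear_combination hβk k - α k * h10 - β k * h11
        intro z hz
        intro f hf
        obtain ⟨e₁, e₂, hze⟩ := Submodule.mem_span_pair.mp ((mem_linSet_iff z).mp hz)
        have key1 : ∑ i, (vec D b (fun k => rh 0 * α k + rh 1 * β k)) i
            * MvPolynomial.eval x.rep (MvPolynomial.pderiv i f) = 0 := by
          refine directional_deriv_eq_zero (fun t => ?_) hf
          have h4 : x.rep + t • vec D b (fun k => rh 0 * α k + rh 1 * β k)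
              = vec D b (μ • (fun k => c 0 * α k + c 1 * β k)
                  + t • (fun k => rh 0 * α k + rh 1 * β k)) := by
            rw [hxrep, ← vec_smul D μ b, vec_smul', vec_smul', vec_add_right]
          rw [h4]
          exact cone_vec D b _
        have key2 : ∑ i, (vec D sh (fun k => c 0 * α k + c 1 * β k)) i
            * MvPolynomial.eval x.rep (MvPolynomial.pderiv i f) = 0 := by
          refine directional_deriv_eq_zero (fun t => ?_) hf
          have h4 : x.rep + t • vec D sh (fun k => c 0 * α k + c 1 * β k)
              = vec D (μ • b + t • sh) (fun k => c 0 * α k + c 1 * β k) := by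
            rw [hxrep, vec_smul, vec_add_left]
          rw [h4]
          exact cone_vec D _ _
        have key3 : ∑ i, x.rep i
            * MvPolynomial.eval x.rep (MvPolynomial.pderiv i f) = 0 := by
          refine directional_deriv_eq_zero (fun t => ?_) hf
          have h4 : x.rep + t • x.rep
              = vec D (μ • b + t • (μ • b)) (fun k => c 0 * α k + c 1 * β k) := by
            rw [hxrep, vec_smul, vec_add_left]
          rw [h4]
          exact cone_vec D _ _
        calc ∑ i, z.rep i * MvPolynomial.eval x.rep (MvPolynomial.pderiv i f)
            = e₁ * (∑ i, (vec D b (fun k => rh 0 * α k + rh 1 * β k)) i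
                  * MvPolynomial.eval x.rep (MvPolynomial.pderiv i f))
              + e₁ * (∑ i, (vec D sh (fun k => c 0 * α k + c 1 * β k)) i
                  * MvPolynomial.eval x.rep (MvPolynomial.pderiv i f))
              + e₂ * (∑ i, x.rep i * MvPolynomial.eval x.rep (MvPolynomial.pderiv i f)) := by
              rw [Finset.mul_sum, Finset.mul_sum, Finset.mul_sum,
                ← Finset.sum_add_distrib, ← Finset.sum_add_distrib]
              refine Finset.sum_congr rfl fun i _ => ?_
              have h6 : z.rep i = e₁ * (vec D b (fun k => rh 0 * α k + rh 1 * β k)) i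
                  + e₁ * (vec D sh (fun k => c 0 * α k + c 1 * β k)) i + e₂ * x.rep i := by
                rw [← hze, hdecomp]
                simp only [Pi.add_apply, Pi.smul_apply, smul_eq_mul]
                ring
              rw [h6]
              ring
          _ = 0 := by rw [key1, key2, key3]; ring
      · -- a second intersection point exists
        have he : (b 0 * c 0 + b 1 * c 1) * (b 0 * c 0 + b 1 * c 1)⁻¹ = 1 :=
          mul_inv_cancel₀ hσ
        have hyvec : p.rep - (b 0 * c 0 + b 1 * c 1)⁻¹ • vec D b
              (fun k => c 0 * α k + c 1 * β k)
            = vec D ![(b 0 * c 0 + b 1 * c 1)⁻¹ * c 1, -((b 0 * c 0 + b 1 * c 1)⁻¹ * c 0)]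
              (fun k => b 1 * α k - b 0 * β k) := by
          apply eq_of_ent_eq D hn1
          intro j k
          rw [map_sub, map_smul, ent_vec, ent_vec, smul_eq_mul]
          fin_cases j
          · show ent D hn1 0 k p.rep
                - (b 0 * c 0 + b 1 * c 1)⁻¹ * (b 0 * (c 0 * α k + c 1 * β k))
              = (b 0 * c 0 + b 1 * c 1)⁻¹ * c 1 * (b 1 * α k - b 0 * β k)
            linear_combination hαk k - α k * he
          · show ent D hn1 1 k p.rep
                - (b 0 * c 0 + b 1 * c 1)⁻¹ * (b 1 * (c 0 * α k + c 1 * β k))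
              = -((b 0 * c 0 + b 1 * c 1)⁻¹ * c 0) * (b 1 * α k - b 0 * β k)
            linear_combination hβk k - β k * he
        have hyv0 : p.rep - (b 0 * c 0 + b 1 * c 1)⁻¹ • vec D b
            (fun k => c 0 * α k + c 1 * β k) ≠ 0 := by
          intro h0
          apply hp
          rw [mem_carrier_iff]
          refine ⟨(b 0 * c 0 + b 1 * c 1)⁻¹ • b, _,
            smul_ne_zero (inv_ne_zero hσ) hb, hγ0, ?_⟩
          rw [← vec_smul]
          exact sub_eq_zero.mp h0
        refine ⟨hLline, Or.inl ⟨x, ⟨hxX, hxL⟩, Projectivization.mk K _ hyv0, ⟨?_, ?_⟩, ?_⟩⟩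
        · rw [mk_mem_carrier]
          refine ⟨_, _, ?_, ?_, hyvec⟩
          · intro h0; apply hyv0; rw [hyvec, h0, vec_zero_left]
          · intro h0; apply hyv0; rw [hyvec, h0, vec_zero_right]
        · rw [mk_mem_linSet_iff]
          apply Submodule.mem_span_pair.mpr
          refine ⟨1, -((b 0 * c 0 + b 1 * c 1)⁻¹ * μ⁻¹), ?_⟩
          rw [one_smul, hxrep', smul_smul]
          rw [show -((b 0 * c 0 + b 1 * c 1)⁻¹ * μ⁻¹) * μ = -(b 0 * c 0 + b 1 * c 1)⁻¹ by
            rw [neg_mul, mul_assoc, inv_mul_cancel₀ hμ0, mul_one]]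
          rw [neg_smul, ← sub_eq_add_neg]
        · intro h0
          have h1 := h0
          rw [← x.mk_rep, Projectivization.mk_eq_mk_iff'] at h1
          obtain ⟨a0, ha0⟩ := h1
          have ha00 : a0 ≠ 0 := by
            intro h2
            exact x.rep_nonzero (by rw [← ha0, h2, zero_smul])
          apply hp
          rw [mem_carrier_iff]
          have hpr : p.rep = (a0⁻¹ * μ + (b 0 * c 0 + b 1 * c 1)⁻¹)
              • vec D b (fun k => c 0 * α k + c 1 * β k) := by
            have h2 : a0 • (p.rep - (b 0 * c 0 + b 1 * c 1)⁻¹ • vec D b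
                (fun k => c 0 * α k + c 1 * β k))
                = μ • vec D b (fun k => c 0 * α k + c 1 * β k) := by
              rw [ha0, hxrep']
            rw [smul_sub, sub_eq_iff_eq_add] at h2
            have h3 : p.rep = a0⁻¹ • ((μ • vec D b (fun k => c 0 * α k + c 1 * β k))
                + a0 • (b 0 * c 0 + b 1 * c 1)⁻¹ • vec D b
                  (fun k => c 0 * α k + c 1 * β k)) := by
              rw [← h2, smul_smul, inv_mul_cancel₀ ha00, one_smul]
            rw [h3]
            rw [smul_add, smul_smul, smul_smul, smul_smul, ← add_smul]
            congr 1
            field_simp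
          rcases eq_or_ne (a0⁻¹ * μ + (b 0 * c 0 + b 1 * c 1)⁻¹) 0 with hτ | hτ
          · exact absurd (by rw [hpr, hτ, zero_smul]) p.rep_nonzero
          · exact ⟨_, _, smul_ne_zero hτ hb, hγ0, by rw [hpr, vec_smul]⟩
    right
    exact Set.mem_biUnion ⟨hsec, hpL⟩ hxL

end SecantLoci
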